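/- Let a, b > 0 and let τ, ν ∈ (0,1) with ν ≤ min{τ, 1-τ} or ν ≥ max{τ, 1-τ}. Then ((a∇b)² - H_τ(a,b)²)/(τ(1-τ)) ≤ ((a∇b)² - H_ν(a,b)²)/(ν(1-ν)). -/

import Mathlib

open Real Set

noncomputable def Fc (v : ℝ) : ℝ := ∑' n : ℕ, v ^ n / (Nat.factorial (2*n) : ℝ)

lemma Fc_sq (w : ℝ) : Fc (w ^ 2) = Real.cosh w := by
  rw [Real.cosh_eq_tsum, Fc]
  congr 1
  ext n
  rw [pow_mul]

lemma Fc_summable {v : ℝ} (hv : 0 ≤ v) : Summable (fun n : ℕ => v ^ n / (Nat.factorial (2*n) : ℝ)) := by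
  have h := (Real.hasSum_cosh (Real.sqrt v)).summable
  have e : ∀ n : ℕ, Real.sqrt v ^ (2 * n) = v ^ n := by
    intro n; rw [pow_mul, Real.sq_sqrt hv]
  simpa [e] using h

lemma Fc_convex : ConvexOn ℝ (Set.Ici (0:ℝ)) Fc := by
  refine ⟨convex_Ici 0, fun x hx y hy p q hp hq hpq => ?_⟩
  simp only [smul_eq_mul]
  have hx' : (0:ℝ) ≤ x := hx
  have hy' : (0:ℝ) ≤ y := hy
  have hsx := Fc_summable hx'
  have hsy := Fc_summable hy'
  have hsum : Summable (fun n : ℕ => p * (x ^ n / (Nat.factorial (2*n) : ℝ)) + q * (y ^ n / (Nat.factorial (2*n) : ℝ))) :=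
    (hsx.mul_left p).add (hsy.mul_left q)
  have hle : Fc (p*x+q*y) ≤ ∑' n : ℕ, (p * (x ^ n / (Nat.factorial (2*n) : ℝ)) + q * (y ^ n / (Nat.factorial (2*n) : ℝ))) := by
    refine Summable.tsum_le_tsum (fun n => ?_) (Fc_summable (by positivity)) hsum
    have h1 : (p*x+q*y)^n ≤ p * x^n + q * y^n := by
      have := (convexOn_pow n).2 hx hy hp hq hpq
      simpa using this
    have hf : (0:ℝ) < (Nat.factorial (2*n) : ℝ) := by positivity
    calc (p*x+q*y)^n / ((Nat.factorial (2*n) : ℝ) : ℝ) ≤ (p * x^n + q * y^n) / (Nat.factorial (2*n) : ℝ) :=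
          (div_le_div_iff_of_pos_right hf).mpr h1
      _ = p * (x ^ n / (Nat.factorial (2*n) : ℝ)) + q * (y ^ n / (Nat.factorial (2*n) : ℝ)) := by ring
  calc Fc (p*x+q*y) ≤ ∑' n : ℕ, (p * (x ^ n / (Nat.factorial (2*n) : ℝ)) + q * (y ^ n / (Nat.factorial (2*n) : ℝ))) := hle
    _ = p * Fc x + q * Fc y := by
        rw [Summable.tsum_add (hsx.mul_left p) (hsy.mul_left q), tsum_mul_left, tsum_mul_left]
        rfl

lemma Fc_slope {x y z : ℝ} (hx : 0 ≤ x) (hxy : x ≤ y) (hyz : y < z) :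
    (Fc z - Fc x) / (z - x) ≤ (Fc z - Fc y) / (z - y) := by
  have h0y : (0:ℝ) ≤ y := hx.trans hxy
  have hz : (0:ℝ) ≤ z := h0y.trans hyz.le
  have hs := Fc_convex.slope_mono (Set.mem_Ici.mpr hz)
  have hxz : x ≠ z := ne_of_lt (hxy.trans_lt hyz)
  have hyne : y ≠ z := ne_of_lt hyz
  have h1 := hs ⟨Set.mem_Ici.mpr hx, fun hm => hxz (Set.mem_singleton_iff.mp hm)⟩
    ⟨Set.mem_Ici.mpr h0y, fun hm => hyne (Set.mem_singleton_iff.mp hm)⟩ hxy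
  simp only [slope_def_field] at h1
  have e1 : (Fc x - Fc z)/(x - z) = (Fc z - Fc x)/(z - x) := by
    rw [← neg_sub (Fc z), ← neg_sub z, neg_div_neg_eq]
  have e2 : (Fc y - Fc z)/(y - z) = (Fc z - Fc y)/(z - y) := by
    rw [← neg_sub (Fc z), ← neg_sub z, neg_div_neg_eq]
  calc (Fc z - Fc x) / (z - x) = (Fc x - Fc z)/(x - z) := e1.symm
    _ ≤ (Fc y - Fc z)/(y - z) := h1
    _ = (Fc z - Fc y) / (z - y) := e2

lemma core {d τ ν : ℝ} (hτ : τ ∈ Set.Ioo (0:ℝ) 1) (hν : ν ∈ Set.Ioo (0:ℝ) 1)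
    (hsq : (2*τ-1)^2 ≤ (2*ν-1)^2) :
    (Real.cosh (d/2) ^ 2 - Real.cosh ((τ - 1/2) * d) ^ 2) / (τ * (1-τ)) ≤
    (Real.cosh (d/2) ^ 2 - Real.cosh ((ν - 1/2) * d) ^ 2) / (ν * (1-ν)) := by
  rcases eq_or_ne d 0 with rfl | hd
  · simp
  · have hd2 : (0:ℝ) < d^2 := by positivity
    have hτ0 : (0:ℝ) < τ * (1-τ) := by nlinarith [hτ.1, hτ.2]
    have hν0 : (0:ℝ) < ν * (1-ν) := by nlinarith [hν.1, hν.2]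
    have hc : ∀ w : ℝ, Real.cosh w ^ 2 = (Fc ((2*w)^2) + 1) / 2 := by
      intro w
      have h2 : Real.cosh (2*w) = 2 * Real.cosh w ^ 2 - 1 := by
        rw [Real.cosh_two_mul, Real.cosh_sq]; ring
      rw [Fc_sq, h2]; ring
    simp only [hc]
    rw [show (2*(d/2))^2 = d^2 by ring,
        show (2*((τ - 1/2)*d))^2 = (2*τ-1)^2 * d^2 by ring,
        show (2*((ν - 1/2)*d))^2 = (2*ν-1)^2 * d^2 by ring]
    have key := Fc_slope (x := (2*τ-1)^2 * d^2) (y := (2*ν-1)^2 * d^2) (z := d^2)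
      (by positivity) (mul_le_mul_of_nonneg_right hsq (sq_nonneg d))
      (by nlinarith [hν.1, hν.2])
    rw [show d^2 - (2*τ-1)^2*d^2 = (τ*(1-τ)) * (4*d^2) by ring,
        show d^2 - (2*ν-1)^2*d^2 = (ν*(1-ν)) * (4*d^2) by ring] at key
    have hp4 : (0:ℝ) < τ*(1-τ) * (4*d^2) := by positivity
    have hq4 : (0:ℝ) < ν*(1-ν) * (4*d^2) := by positivity
    have k2 := (div_le_div_iff₀ hp4 hq4).mp key
    have key' : (Fc (d^2) - Fc ((2*τ-1)^2*d^2))/(τ*(1-τ))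
        ≤ (Fc (d^2) - Fc ((2*ν-1)^2*d^2))/(ν*(1-ν)) := by
      rw [div_le_div_iff₀ hτ0 hν0]
      nlinarith [k2, hd2]
    have g1 : ((Fc (d^2) + 1)/2 - (Fc ((2*τ-1)^2*d^2) + 1)/2)/(τ*(1-τ))
        = ((Fc (d^2) - Fc ((2*τ-1)^2*d^2))/(τ*(1-τ)))/2 := by
      rw [show (Fc (d^2) + 1)/2 - (Fc ((2*τ-1)^2*d^2) + 1)/2
            = (Fc (d^2) - Fc ((2*τ-1)^2*d^2))/2 by ring, div_div, div_div, mul_comm 2 (τ*(1-τ))]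
    have g2 : ((Fc (d^2) + 1)/2 - (Fc ((2*ν-1)^2*d^2) + 1)/2)/(ν*(1-ν))
        = ((Fc (d^2) - Fc ((2*ν-1)^2*d^2))/(ν*(1-ν)))/2 := by
      rw [show (Fc (d^2) + 1)/2 - (Fc ((2*ν-1)^2*d^2) + 1)/2
            = (Fc (d^2) - Fc ((2*ν-1)^2*d^2))/2 by ring, div_div, div_div, mul_comm 2 (ν*(1-ν))]
    rw [g1, g2]
    linarith [key']

theorem heinz_squared_comparison (a b ν τ : ℝ) (ha : 0 < a) (hb : 0 < b)
    (hν : ν ∈ Set.Ioo (0:ℝ) 1) (hτ : τ ∈ Set.Ioo (0:ℝ) 1)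
    (h : ν ≤ min τ (1 - τ) ∨ max τ (1 - τ) ≤ ν) :
    (((a + b) / 2) ^ 2 - ((a ^ τ * b ^ (1 - τ) + a ^ (1 - τ) * b ^ τ) / 2) ^ 2) / (τ * (1 - τ)) ≤
    (((a + b) / 2) ^ 2 - ((a ^ ν * b ^ (1 - ν) + a ^ (1 - ν) * b ^ ν) / 2) ^ 2) / (ν * (1 - ν)) := by
  set la := Real.log a with hla
  set lb := Real.log b with hlb
  have hsq : (2*τ-1)^2 ≤ (2*ν-1)^2 := by
    rcases h with h' | h'
    · have h1 : ν ≤ τ := le_trans h' (min_le_left _ _)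
      have h2 : ν ≤ 1 - τ := le_trans h' (min_le_right _ _)
      nlinarith
    · have h1 : τ ≤ ν := le_trans (le_max_left _ _) h'
      have h2 : 1 - τ ≤ ν := le_trans (le_max_right _ _) h'
      nlinarith
  have key : ∀ t : ℝ, a ^ t * b ^ (1 - t) + a ^ (1 - t) * b ^ t
      = Real.exp ((la + lb)/2) * (2 * Real.cosh ((t - 1/2) * (la - lb))) := by
    intro t
    have h1 : a ^ t * b ^ (1-t) = Real.exp ((la+lb)/2 + (t - 1/2)*(la - lb)) := by
      rw [Real.rpow_def_of_pos ha, Real.rpow_def_of_pos hb, ← Real.exp_add]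
      congr 1; ring
    have h2 : a ^ (1-t) * b ^ t = Real.exp ((la+lb)/2 + -((t - 1/2)*(la - lb))) := by
      rw [Real.rpow_def_of_pos ha, Real.rpow_def_of_pos hb, ← Real.exp_add]
      congr 1; ring
    rw [h1, h2, Real.cosh_eq,
        show (2:ℝ) * ((Real.exp ((t - 1/2)*(la-lb)) + Real.exp (-((t - 1/2)*(la-lb))))/2)
          = Real.exp ((t - 1/2)*(la-lb)) + Real.exp (-((t - 1/2)*(la-lb))) by ring,
        mul_add, ← Real.exp_add, ← Real.exp_add]
  have hab : a + b = Real.exp ((la+lb)/2) * (2 * Real.cosh ((la - lb)/2)) := by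
    have h1 : a = Real.exp ((la+lb)/2 + (la-lb)/2) := by
      rw [show (la+lb)/2 + (la-lb)/2 = la by ring, hla, Real.exp_log ha]
    have h2 : b = Real.exp ((la+lb)/2 + -((la-lb)/2)) := by
      rw [show (la+lb)/2 + -((la-lb)/2) = lb by ring, hlb, Real.exp_log hb]
    rw [Real.cosh_eq,
        show (2:ℝ) * ((Real.exp ((la-lb)/2) + Real.exp (-((la-lb)/2)))/2)
          = Real.exp ((la-lb)/2) + Real.exp (-((la-lb)/2)) by ring,
        mul_add, ← Real.exp_add, ← Real.exp_add]
    rw [h1, h2]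
  have hτ0 : τ * (1-τ) ≠ 0 := by nlinarith [hτ.1, hτ.2]
  have hν0 : ν * (1-ν) ≠ 0 := by nlinarith [hν.1, hν.2]
  have main := core (d := la - lb) hτ hν hsq
  have eL : (((a + b) / 2) ^ 2 - ((a ^ τ * b ^ (1 - τ) + a ^ (1 - τ) * b ^ τ) / 2) ^ 2) / (τ * (1 - τ))
      = (Real.exp ((la+lb)/2))^2 *
        ((Real.cosh ((la-lb)/2) ^ 2 - Real.cosh ((τ - 1/2) * (la - lb)) ^ 2) / (τ * (1-τ))) := by
    rw [key τ, hab]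
    field_simp
  have eR : (((a + b) / 2) ^ 2 - ((a ^ ν * b ^ (1 - ν) + a ^ (1 - ν) * b ^ ν) / 2) ^ 2) / (ν * (1 - ν))
      = (Real.exp ((la+lb)/2))^2 *
        ((Real.cosh ((la-lb)/2) ^ 2 - Real.cosh ((ν - 1/2) * (la - lb)) ^ 2) / (ν * (1-ν))) := by
    rw [key ν, hab]
    field_simp
  rw [eL, eR]
  exact mul_le_mul_of_nonneg_left main (sq_nonneg _)
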